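/- arXiv:2201.05637 — 2 statements merged into one kernel-verified Lean document; each statement's English description precedes it below -/
import Mathlib

section
/- For a finite group G, the set G⁻ = {g ∈ G : ⟨g⟩ is not maximal cyclic} equals {gᑫ : g ∈ G, q a prime dividing the order of g}. -/
/-- A subgroup is maximal cyclic if it is cyclic and not properly contained
in any cyclic subgroup. -/
def IsMaximalCyclic {G : Type*} [Group G] (C : Subgroup G) : Prop :=
  IsCyclic C ∧ ∀ D : Subgroup G, IsCyclic D → C ≤ D → C = D

/-- η(G): the number of conjugacy classes of maximal cyclic subgroups of `G`. -/
noncomputable def eta (G : Type*) [Group G] : ℕ :=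
  Nat.card (Quot (fun C D : {C : Subgroup G // IsMaximalCyclic C} =>
    ∃ g : G, D.1 = C.1.map (MulAut.conj g).toMonoidHom))

/-- The set of elements generating a non-maximal cyclic subgroup. -/
def Gminus (G : Type*) [Group G] : Set G :=
  {g : G | ¬ IsMaximalCyclic (Subgroup.zpowers g)}

/-- `C` is a maximal cyclic subgroup of `N` (all inside an ambient group). -/
def IsMaximalCyclicIn {G : Type*} [Group G] (N C : Subgroup G) : Prop :=
  C ≤ N ∧ IsCyclic C ∧ ∀ D : Subgroup G, D ≤ N → IsCyclic D → C ≤ D → C = D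

lemma zpowers_isCyclic' {G : Type*} [Group G] (g : G) :
    IsCyclic (Subgroup.zpowers g) := by
  refine ⟨⟨⟨g, Subgroup.mem_zpowers g⟩, ?_⟩⟩
  rintro ⟨y, hy⟩
  obtain ⟨k, hk⟩ := Subgroup.mem_zpowers_iff.mp hy
  exact Subgroup.mem_zpowers_iff.mpr ⟨k, Subtype.ext (by simpa using hk)⟩

theorem stmt_11 {G : Type*} [Group G] [Finite G] :
    Gminus G = {x : G | ∃ (g : G) (q : ℕ), q.Prime ∧ q ∣ orderOf g ∧ x = g ^ q} := by
  ext x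
  simp only [Gminus, Set.mem_setOf_eq]
  constructor
  · intro hx
    rw [IsMaximalCyclic] at hx
    push_neg at hx
    obtain ⟨D, hDcyc, hle, hne⟩ := hx (zpowers_isCyclic' x)
    obtain ⟨⟨h, hhD⟩, hgen⟩ := hDcyc.exists_generator
    have hD : D = Subgroup.zpowers h := by
      apply le_antisymm
      · intro y hy
        obtain ⟨c, hc⟩ := hgen ⟨y, hy⟩
        exact ⟨c, congrArg Subtype.val hc⟩
      · exact Subgroup.zpowers_le.mpr hhD
    rw [hD] at hle hne
    have hxh : x ∈ Subgroup.zpowers h := hle (Subgroup.mem_zpowers x)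
    have hmdvd : orderOf x ∣ orderOf h := orderOf_dvd_of_mem_zpowers hxh
    have hnpos : 0 < orderOf h := orderOf_pos h
    have hmpos : 0 < orderOf x := orderOf_pos x
    have hmne : orderOf x ≠ orderOf h := by
      intro he
      apply hne
      apply Subgroup.eq_of_le_of_card_ge hle
      rw [Nat.card_zpowers, Nat.card_zpowers, he]
    obtain ⟨s, hs⟩ := hmdvd
    have hs1 : s ≠ 1 := by
      intro h1; rw [h1, mul_one] at hs; exact hmne hs.symm
    obtain ⟨q, hq, hqs⟩ := Nat.exists_prime_and_dvd hs1
    obtain ⟨k, hk⟩ := hqs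
    have hkpos : 0 < k := by
      rcases Nat.eq_zero_or_pos k with h0 | h0
      · rw [h0, mul_zero] at hk; rw [hk, mul_zero] at hs; omega
      · exact h0
    set m := orderOf x with hm
    set y := h ^ k with hy
    have hn : orderOf h = m * q * k := by rw [hs, hk]; ring
    have hyord : orderOf y = m * q := by
      rw [hy, orderOf_pow, hn, Nat.gcd_eq_right ⟨m * q, by ring⟩,
        Nat.mul_div_cancel _ hkpos]
    obtain ⟨a, ha⟩ := mem_powers_iff_mem_zpowers.mpr hxh
    simp only [Submonoid.pow_apply] at ha
    have ha' : h ^ a = x := ha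
    have hna : orderOf h ∣ a * m := by
      rw [orderOf_dvd_iff_pow_eq_one, pow_mul, ha', hm, pow_orderOf_eq_one]
    have hqka : q * k ∣ a := by
      rcases hna with ⟨c, hc⟩
      rw [hn] at hc
      refine ⟨c, Nat.eq_of_mul_eq_mul_left hmpos ?_⟩
      calc m * a = a * m := by ring
        _ = m * q * k * c := hc
        _ = m * (q * k * c) := by ring
    obtain ⟨t, ht⟩ := hqka
    have hxy : x = y ^ (q * t) := by
      rw [hy, ← pow_mul, ← ha', ht]; ring_nf
    have hcop : Nat.Coprime m t := by
      have h1 : orderOf (y ^ (q * t)) = m := by rw [← hxy]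
      rw [orderOf_pow, hyord] at h1
      have hg : Nat.gcd (m * q) (q * t) = q * Nat.gcd m t := by
        rw [mul_comm m q, Nat.gcd_mul_left]
      rw [hg] at h1
      have hd : q * Nat.gcd m t ∣ m * q := by
        rw [mul_comm m q]; exact Nat.mul_dvd_mul_left q (Nat.gcd_dvd_left m t)
      have h2 : m * q = q * Nat.gcd m t * m := Nat.eq_mul_of_div_eq_right hd h1
      have hgpos : 0 < Nat.gcd m t := Nat.gcd_pos_of_pos_left t hmpos
      have hqpos : 0 < q := hq.pos
      nlinarith [hgpos, hqpos, hmpos, h2]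
    have hymq : y ^ (m * q) = 1 := by rw [← hyord, pow_orderOf_eq_one]
    obtain ⟨t', hcop', hxt⟩ :
        ∃ t', Nat.Coprime (m * q) t' ∧ x = (y ^ t') ^ q := by
      by_cases hqt : q ∣ t
      · refine ⟨t + m, Nat.Coprime.mul ?_ ?_, ?_⟩
        · exact Nat.coprime_add_self_right.mpr hcop
        · rw [hq.coprime_iff_not_dvd]
          intro hd
          have hqm : q ∣ m := (Nat.dvd_add_right hqt).mp hd
          have hdvd1 : q ∣ 1 := hcop ▸ Nat.dvd_gcd hqm hqt
          exact hq.one_lt.ne' (Nat.eq_one_of_dvd_one hdvd1)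
        · rw [← pow_mul, mul_comm (t + m) q, mul_add, pow_add, mul_comm q m, hymq,
            mul_one, ← hxy]
      · refine ⟨t, Nat.Coprime.mul hcop ((hq.coprime_iff_not_dvd).mpr hqt), ?_⟩
        rw [← pow_mul, mul_comm t q, ← hxy]
    refine ⟨y ^ t', q, hq, ?_, hxt⟩
    rw [orderOf_pow, hyord, hcop'.gcd_eq_one, Nat.div_one]
    exact ⟨m, by ring⟩
  · rintro ⟨g, q, hq, hqd, rfl⟩
    rintro ⟨-, hmax⟩
    have hle : Subgroup.zpowers (g ^ q) ≤ Subgroup.zpowers g :=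
      Subgroup.zpowers_le.mpr ⟨(q : ℤ), by simp⟩
    have heq := hmax (Subgroup.zpowers g) (zpowers_isCyclic' g) hle
    have hcard : orderOf (g ^ q) = orderOf g := by
      rw [← Nat.card_zpowers, ← Nat.card_zpowers, heq]
    rw [orderOf_pow, Nat.gcd_eq_right hqd] at hcard
    have := Nat.div_lt_self (orderOf_pos g) hq.one_lt
    omega
end

section
/- If N is a proper normal subgroup of a finite group G, then η(G/N) ≤ η(G). -/
section Aux

variable {G : Type*} {H : Type*} [Group G] [Group H]

lemma isCyclic_map (f : G →* H) (C : Subgroup G) (h : IsCyclic C) :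
    IsCyclic (C.map f) :=
  isCyclic_of_surjective (f.subgroupMap C) (f.subgroupMap_surjective C)

lemma map_map_symm (e : G ≃* H) (C : Subgroup G) :
    (C.map e.toMonoidHom).map e.symm.toMonoidHom = C := by
  rw [Subgroup.map_map]
  simp

lemma isMaximalCyclic_map_of (e : G ≃* H) (C : Subgroup G) (h : IsMaximalCyclic C) :
    IsMaximalCyclic (C.map e.toMonoidHom) := by
  refine ⟨isCyclic_map _ _ h.1, fun E hE hle => ?_⟩
  have h1 : C ≤ E.map e.symm.toMonoidHom := fun x hx =>
    ⟨e x, hle ⟨x, hx, rfl⟩, by simp⟩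
  have h3 := h.2 _ (isCyclic_map _ _ hE) h1
  rw [h3]
  exact map_map_symm e.symm E

lemma isMaximalCyclic_map_iff (e : G ≃* H) (C : Subgroup G) :
    IsMaximalCyclic (C.map e.toMonoidHom) ↔ IsMaximalCyclic C := by
  refine ⟨fun h => ?_, isMaximalCyclic_map_of e C⟩
  have := isMaximalCyclic_map_of e.symm _ h
  rwa [map_map_symm] at this

lemma exists_zpowers_eq (C : Subgroup G) (h : IsCyclic C) :
    ∃ g : G, C = Subgroup.zpowers g := by
  obtain ⟨⟨g, hgC⟩, hg⟩ := h.exists_generator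
  refine ⟨g, le_antisymm (fun y hy => ?_) (Subgroup.zpowers_le.mpr hgC)⟩
  obtain ⟨n, hn⟩ := Subgroup.mem_zpowers_iff.mp (hg ⟨y, hy⟩)
  refine Subgroup.mem_zpowers_iff.mpr ⟨n, ?_⟩
  simpa using congrArg Subtype.val hn

lemma isCyclic_zpowers' (g : G) : IsCyclic (Subgroup.zpowers g) := by
  refine ⟨⟨⟨g, Subgroup.mem_zpowers g⟩, fun x => ?_⟩⟩
  obtain ⟨n, hn⟩ := Subgroup.mem_zpowers_iff.mp x.2
  exact Subgroup.mem_zpowers_iff.mpr ⟨n, Subtype.ext (by simpa using hn)⟩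

lemma exists_maximalCyclic_ge [Finite G] (g : G) :
    ∃ D : Subgroup G, IsMaximalCyclic D ∧ g ∈ D := by
  obtain ⟨D, ⟨hDc, hgD⟩, hmax⟩ :=
    Set.Finite.exists_maximalFor id {D : Subgroup G | IsCyclic D ∧ g ∈ D}
      (Set.toFinite _) ⟨Subgroup.zpowers g, isCyclic_zpowers' g, Subgroup.mem_zpowers g⟩
  exact ⟨D, ⟨hDc, fun E hEc hle => le_antisymm hle (hmax ⟨hEc, hle hgD⟩ hle)⟩, hgD⟩

lemma map_conj_comm (f : G →* H) (g : G) (C : Subgroup G) :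
    (C.map (MulAut.conj g).toMonoidHom).map f
      = (C.map f).map (MulAut.conj (f g)).toMonoidHom := by
  rw [Subgroup.map_map, Subgroup.map_map]
  congr 1
  ext x
  simp

end Aux

theorem stmt_18 {G : Type*} [Group G] [Finite G] (N : Subgroup G) [N.Normal]
    (hN : N ≠ ⊤) : eta (G ⧸ N) ≤ eta G := by
  classical
  obtain ⟨D0, hD0, -⟩ := exists_maximalCyclic_ge (1 : G ⧸ N)
  let π : G →* G ⧸ N := QuotientGroup.mk' N
  have hπ : Function.Surjective π := QuotientGroup.mk'_surjective N
  let f : {C : Subgroup G // IsMaximalCyclic C} →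
      Quot (fun C D : {C : Subgroup (G ⧸ N) // IsMaximalCyclic C} =>
        ∃ g : G ⧸ N, D.1 = C.1.map (MulAut.conj g).toMonoidHom) :=
    fun C => if h : IsMaximalCyclic (C.1.map π) then Quot.mk _ ⟨C.1.map π, h⟩
             else Quot.mk _ ⟨D0, hD0⟩
  have hsound : ∀ C D : {C : Subgroup G // IsMaximalCyclic C},
      (∃ g : G, D.1 = C.1.map (MulAut.conj g).toMonoidHom) → f C = f D := by
    rintro C D ⟨g, hg⟩
    have hmap : D.1.map π = (C.1.map π).map (MulAut.conj (π g)).toMonoidHom := by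
      rw [hg, map_conj_comm]
    have hiff : IsMaximalCyclic (D.1.map π) ↔ IsMaximalCyclic (C.1.map π) := by
      rw [hmap]; exact isMaximalCyclic_map_iff (MulAut.conj (π g)) _
    by_cases h : IsMaximalCyclic (C.1.map π)
    · show (if h : _ then _ else _) = (if h : _ then _ else _)
      rw [dif_pos h, dif_pos (hiff.mpr h)]
      exact Quot.sound ⟨π g, hmap⟩
    · show (if h : _ then _ else _) = (if h : _ then _ else _)
      rw [dif_neg h, dif_neg (fun hh => h (hiff.mp hh))]
  have hsurj : Function.Surjective (Quot.lift f hsound) := by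
    apply Quot.ind
    rintro ⟨Cb, hCb⟩
    obtain ⟨x, hx⟩ := exists_zpowers_eq Cb hCb.1
    obtain ⟨g, hgx⟩ := hπ x
    obtain ⟨D, hD, hgD⟩ := exists_maximalCyclic_ge g
    have hle : Cb ≤ D.map π := by
      rw [hx, ← hgx]
      exact Subgroup.zpowers_le.mpr ⟨g, hgD, rfl⟩
    have hEq : Cb = D.map π := hCb.2 _ (isCyclic_map _ _ hD.1) hle
    refine ⟨Quot.mk _ ⟨D, hD⟩, ?_⟩
    have hmc : IsMaximalCyclic (D.map π) := hEq ▸ hCb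
    show (if h : _ then _ else _) = _
    rw [dif_pos hmc]
    exact congrArg (Quot.mk _) (Subtype.ext hEq.symm)
  exact Nat.card_le_card_of_surjective _ hsurj
end
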